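/- The lattice of systems on a finite lattice P is upper semimodular: if f·g is covered by both f and g, then f + g covers both f and g. -/

import Mathlib

def IsSystem {P : Type*} [Lattice P] (f : P → P) : Prop :=
  (∀ a, a ≤ f a) ∧ Monotone f ∧ ∀ a, f (f a) = f a

def sysMeet {P : Type*} [Lattice P] (f g : P → P) : P → P := fun a => f a ⊓ g a

def sysJoin {P : Type*} [Lattice P] [Fintype P] (f g : P → P) : P → P :=
  (f ∘ g)^[Fintype.card P]

/-- `g` covers `f` in the lattice of systems. -/
def SysCovBy {P : Type*} [Lattice P] (f g : P → P) : Prop :=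
  (∀ a, f a ≤ g a) ∧ f ≠ g ∧
    ∀ h : P → P, IsSystem h → (∀ a, f a ≤ h a) → (∀ a, h a ≤ g a) →
      h = f ∨ h = g

open Classical

namespace SysAux

variable {P : Type*} [Lattice P]

/-- The set of fixed points of a map. -/
def fixedSet (f : P → P) : Set P := {a | f a = a}

lemma mem_fixedSet {f : P → P} {a : P} : a ∈ fixedSet f ↔ f a = a := Iff.rfl

/-- Pointwise order between systems is reverse inclusion of fixed sets. -/
theorem sys_le_iff {f g : P → P} (hf : IsSystem f) (hg : IsSystem g) :
    (∀ a, f a ≤ g a) ↔ fixedSet g ⊆ fixedSet f := by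
  constructor
  · intro h a ha
    refine le_antisymm ?_ (hf.1 a)
    calc f a ≤ g a := h a
    _ = a := ha
  · intro h a
    have hga : g a ∈ fixedSet g := hg.2.2 a
    have : f (g a) = g a := h hga
    calc f a ≤ f (g a) := hf.2.1 (hg.1 a)
    _ = g a := this

theorem sys_eq_iff {f g : P → P} (hf : IsSystem f) (hg : IsSystem g) :
    f = g ↔ fixedSet f = fixedSet g := by
  constructor
  · rintro rfl; rfl
  · intro h
    funext a
    exact le_antisymm ((sys_le_iff hf hg).2 h.ge a) ((sys_le_iff hg hf).2 h.le a)

def MeetClosed (S : Set P) : Prop := ∀ a ∈ S, ∀ b ∈ S, a ⊓ b ∈ S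

theorem fixedSet_meetClosed {f : P → P} (hf : IsSystem f) : MeetClosed (fixedSet f) := by
  intro a ha b hb
  refine le_antisymm ?_ (hf.1 _)
  have : f (a ⊓ b) ≤ f a ⊓ f b := le_inf (hf.2.1 inf_le_left) (hf.2.1 inf_le_right)
  calc f (a ⊓ b) ≤ f a ⊓ f b := this
  _ = a ⊓ b := by rw [mem_fixedSet.1 ha, mem_fixedSet.1 hb]

variable [Fintype P]

/-- The finset of elements of `S` above `a`. -/
noncomputable def ub (S : Set P) (a : P) : Finset P :=
  Finset.univ.filter (fun b => b ∈ S ∧ a ≤ b)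

lemma mem_ub {S : Set P} {a b : P} : b ∈ ub S a ↔ b ∈ S ∧ a ≤ b := by
  simp [ub]

/-- Closure operator of a meet-closed set. -/
noncomputable def clOf (S : Set P) (a : P) : P :=
  if h : (ub S a).Nonempty then (ub S a).inf' h id else a

lemma le_clOf {S : Set P} {a : P} : a ≤ clOf S a := by
  unfold clOf
  split
  · exact Finset.le_inf' _ _ fun b hb => (mem_ub.1 hb).2
  · exact le_rfl

lemma clOf_le {S : Set P} {a b : P} (hb : b ∈ S) (hab : a ≤ b) : clOf S a ≤ b := by
  have hne : (ub S a).Nonempty := ⟨b, mem_ub.2 ⟨hb, hab⟩⟩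
  rw [clOf, dif_pos hne]
  exact Finset.inf'_le id (mem_ub.2 ⟨hb, hab⟩)

lemma clOf_mem {S : Set P} (hS : MeetClosed S) {a : P} (h : (ub S a).Nonempty) :
    clOf S a ∈ S := by
  rw [clOf, dif_pos h]
  exact Finset.inf'_mem S hS _ h id (fun b hb => (mem_ub.1 hb).1)

lemma clOf_of_mem {S : Set P} {a : P} (ha : a ∈ S) : clOf S a = a :=
  le_antisymm (clOf_le ha le_rfl) le_clOf

lemma ub_nonempty {S : Set P} {t : P} (ht : t ∈ S) (hta : ∀ a : P, a ≤ t) (a : P) :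
    (ub S a).Nonempty := ⟨t, mem_ub.2 ⟨ht, hta a⟩⟩

theorem clOf_isSystem {S : Set P} (hS : MeetClosed S) {t : P} (ht : t ∈ S)
    (hta : ∀ a : P, a ≤ t) : IsSystem (clOf S) := by
  refine ⟨fun a => le_clOf, ?_, ?_⟩
  · intro a b hab
    exact clOf_le (clOf_mem hS (ub_nonempty ht hta b)) (hab.trans le_clOf)
  · intro a
    exact clOf_of_mem (clOf_mem hS (ub_nonempty ht hta a))

theorem fixedSet_clOf {S : Set P} (hS : MeetClosed S) {t : P} (ht : t ∈ S)
    (hta : ∀ a : P, a ≤ t) : fixedSet (clOf S) = S := by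
  ext a
  constructor
  · intro ha
    have := clOf_mem hS (ub_nonempty ht hta a)
    rwa [mem_fixedSet.1 ha] at this
  · exact clOf_of_mem

/-- top element -/
noncomputable def topP [Nonempty P] : P := Finset.univ.sup' Finset.univ_nonempty id

lemma le_topP [Nonempty P] (a : P) : a ≤ topP :=
  Finset.le_sup' id (Finset.mem_univ a)

lemma topP_mem_fixedSet [Nonempty P] {f : P → P} (hf : IsSystem f) :
    topP ∈ fixedSet f := le_antisymm (le_topP _) (hf.1 _)

/- sysMeet -/

theorem isSystem_sysMeet {f g : P → P} (hf : IsSystem f) (hg : IsSystem g) :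
    IsSystem (sysMeet f g) := by
  refine ⟨fun a => le_inf (hf.1 a) (hg.1 a), ?_, ?_⟩
  · intro a b hab
    exact inf_le_inf (hf.2.1 hab) (hg.2.1 hab)
  · intro a
    refine le_antisymm ?_ (le_inf (hf.1 _) (hg.1 _))
    refine inf_le_inf ?_ ?_
    · calc f (f a ⊓ g a) ≤ f (f a) := hf.2.1 inf_le_left
      _ = f a := hf.2.2 a
    · calc g (f a ⊓ g a) ≤ g (g a) := hg.2.1 inf_le_right
      _ = g a := hg.2.2 a

theorem fixedSet_subset_meet_left {f g : P → P} (hg : IsSystem g) :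
    fixedSet f ⊆ fixedSet (sysMeet f g) := by
  intro a ha
  show f a ⊓ g a = a
  rw [mem_fixedSet.1 ha]
  exact inf_eq_left.2 (hg.1 a)

theorem fixedSet_subset_meet_right {f g : P → P} (hf : IsSystem f) :
    fixedSet g ⊆ fixedSet (sysMeet f g) := by
  intro a ha
  show f a ⊓ g a = a
  rw [mem_fixedSet.1 ha]
  exact inf_eq_right.2 (hf.1 a)

/- sysJoin -/

theorem sysJoin_fix {f g : P → P} (hf : IsSystem f) (hg : IsSystem g) (a : P) :
    f (sysJoin f g a) = sysJoin f g a ∧ g (sysJoin f g a) = sysJoin f g a := by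
  set N := Fintype.card P with hN
  set F := f ∘ g with hF
  have hsucc : ∀ k, F^[k + 1] a = F (F^[k] a) := by
    intro k; rw [Function.iterate_succ_apply']
  have hext : ∀ x : P, x ≤ F x := fun x => (hg.1 x).trans (hf.1 (g x))
  have hmono : Monotone (fun k => F^[k] a) :=
    monotone_nat_of_le_succ (fun k => by rw [hsucc]; exact hext _)
  -- stabilization
  have hstab : ∃ k < N, F^[k] a = F^[k + 1] a := by
    by_contra hcon
    push_neg at hcon
    have key : ∀ j, j ≤ N → ∀ i, i < j → F^[i] a < F^[j] a := by
      intro j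
      induction j with
      | zero => omega
      | succ n ih =>
        intro hj i hi
        have hn : F^[n] a < F^[n + 1] a :=
          lt_of_le_of_ne (hmono (Nat.le_succ n)) (hcon n (by omega))
        rcases Nat.lt_succ_iff_lt_or_eq.1 hi with h | h
        · exact (ih (by omega) i h).trans hn
        · subst h; exact hn
    have hinj : Function.Injective (fun i : Fin (N + 1) => F^[(i : ℕ)] a) := by
      intro i j hij
      by_contra hne
      rcases lt_or_gt_of_ne (fun h : (i : ℕ) = (j : ℕ) => hne (Fin.ext h)) with h | h
      · exact absurd hij (ne_of_lt (key j (Nat.lt_succ_iff.1 j.isLt) i h))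
      · exact absurd hij.symm (ne_of_lt (key i (Nat.lt_succ_iff.1 i.isLt) j h))
    have hcard := Fintype.card_le_of_injective _ hinj
    rw [Fintype.card_fin] at hcard
    omega
  obtain ⟨k, hk, hfix⟩ := hstab
  have hconst : ∀ i, F^[k + i] a = F^[k] a := by
    intro i
    induction i with
    | zero => rfl
    | succ n ih =>
      have : k + (n + 1) = (k + n) + 1 := by omega
      rw [this, hsucc, ih, ← hsucc]
      exact hfix.symm
  have hNk : F^[N] a = F^[k] a := by
    have : N = k + (N - k) := by omega
    rw [this, hconst]
  have hFN : F (F^[N] a) = F^[N] a := by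
    rw [hNk, ← hsucc, ← hfix]
  have hJ : sysJoin f g a = F^[N] a := rfl
  have hgfix : g (F^[N] a) = F^[N] a := by
    refine le_antisymm ?_ (hg.1 _)
    calc g (F^[N] a) ≤ f (g (F^[N] a)) := hf.1 _
    _ = F (F^[N] a) := rfl
    _ = F^[N] a := hFN
  have hffix : f (F^[N] a) = F^[N] a := by
    conv_lhs => rw [← hgfix]
    exact hFN
  rw [hJ]
  exact ⟨hffix, hgfix⟩

theorem isSystem_sysJoin {f g : P → P} (hf : IsSystem f) (hg : IsSystem g) :
    IsSystem (sysJoin f g) := by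
  have hext : ∀ x : P, x ≤ (f ∘ g) x := fun x => (hg.1 x).trans (hf.1 (g x))
  refine ⟨?_, ?_, ?_⟩
  · intro a
    show a ≤ (f ∘ g)^[Fintype.card P] a
    generalize Fintype.card P = n
    induction n with
    | zero => exact le_rfl
    | succ n ih =>
      calc a ≤ (f ∘ g)^[n] a := ih
      _ ≤ (f ∘ g) ((f ∘ g)^[n] a) := hext _
      _ = (f ∘ g)^[n + 1] a := (Function.iterate_succ_apply' _ _ _).symm
  · exact (hf.2.1.comp hg.2.1).iterate _
  · intro a
    have h := sysJoin_fix hf hg a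
    have hF : (f ∘ g) (sysJoin f g a) = sysJoin f g a := by
      show f (g (sysJoin f g a)) = sysJoin f g a
      rw [h.2, h.1]
    exact Function.iterate_fixed hF _

theorem fixedSet_sysJoin {f g : P → P} (hf : IsSystem f) (hg : IsSystem g) :
    fixedSet (sysJoin f g) = fixedSet f ∩ fixedSet g := by
  ext a
  constructor
  · intro ha
    have h := sysJoin_fix hf hg a
    rw [mem_fixedSet.1 ha] at h
    exact ⟨h.1, h.2⟩
  · rintro ⟨hfa, hga⟩
    have hF : (f ∘ g) a = a := by
      show f (g a) = a
      rw [mem_fixedSet.1 hga, mem_fixedSet.1 hfa]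
    exact Function.iterate_fixed hF _

/-- Key step: a cover in the lattice of systems adds a single fixed point. -/
theorem cover_step [Nonempty P] {m f : P → P} (hm : IsSystem m) (hf : IsSystem f)
    (hc : SysCovBy m f) : ∃ x ∉ fixedSet f, fixedSet m = fixedSet f ∪ {x} := by
  have hAC : fixedSet f ⊆ fixedSet m := (sys_le_iff hm hf).1 hc.1
  have hne : fixedSet m ≠ fixedSet f := fun h => hc.2.1 ((sys_eq_iff hm hf).2 h)
  have hdiff : (fixedSet m \ fixedSet f).Nonempty := by
    rw [Set.diff_nonempty]
    intro h
    exact hne (le_antisymm h hAC)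
  obtain ⟨x, hx, hmin⟩ : ∃ x ∈ fixedSet m \ fixedSet f,
      ∀ a' ∈ fixedSet m \ fixedSet f, id a' ≤ id x → id x = id a' := by
    obtain ⟨x, hx⟩ := (Set.toFinite (fixedSet m \ fixedSet f)).exists_minimal hdiff
    exact ⟨x, hx.1, fun a' ha' hle => le_antisymm (hx.2 ha' hle) hle⟩
  simp only [id] at hmin
  set D : Set P := fixedSet f ∪ {x} with hD
  have hDm : MeetClosed D := by
    rintro a (ha | ha) b (hb | hb)
    · exact Or.inl (fixedSet_meetClosed hf a ha b hb)
    · -- b = x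
      rcases hb with rfl
      have hab : a ⊓ b ∈ fixedSet m := fixedSet_meetClosed hm a (hAC ha) b hx.1
      by_cases h : a ⊓ b ∈ fixedSet f
      · exact Or.inl h
      · right
        have := hmin (a ⊓ b) ⟨hab, h⟩ inf_le_right
        exact Set.mem_singleton_iff.2 this.symm
    · rcases ha with rfl
      have hab : a ⊓ b ∈ fixedSet m := fixedSet_meetClosed hm a hx.1 b (hAC hb)
      by_cases h : a ⊓ b ∈ fixedSet f
      · exact Or.inl h
      · right
        have := hmin (a ⊓ b) ⟨hab, h⟩ inf_le_left
        exact Set.mem_singleton_iff.2 this.symm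
    · rcases ha with rfl; rcases hb with rfl
      right; simp
  have htD : topP ∈ D := Or.inl (topP_mem_fixedSet hf)
  have hsys : IsSystem (clOf D) := clOf_isSystem hDm htD le_topP
  have hfixD : fixedSet (clOf D) = D := fixedSet_clOf hDm htD le_topP
  have hDC : D ⊆ fixedSet m := by
    rintro a (ha | ha)
    · exact hAC ha
    · rcases ha with rfl; exact hx.1
  have hmh : ∀ a, m a ≤ clOf D a := by
    refine (sys_le_iff hm hsys).2 ?_
    rw [hfixD]; exact hDC
  have hhf : ∀ a, clOf D a ≤ f a := by
    refine (sys_le_iff hsys hf).2 ?_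
    rw [hfixD]; exact Set.subset_union_left
  rcases hc.2.2 (clOf D) hsys hmh hhf with h | h
  · refine ⟨x, hx.2, ?_⟩
    have := (sys_eq_iff hsys hm).1 h
    rw [hfixD] at this
    exact this.symm
  · exfalso
    have := (sys_eq_iff hsys hf).1 h
    rw [hfixD] at this
    have hxD : x ∈ D := Or.inr rfl
    rw [this] at hxD
    exact hx.2 hxD

/-- From a single-removed-point description of the fixed set, derive the cover. -/
theorem covby_of_fix {f j : P → P} (hf : IsSystem f) (hj : IsSystem j) {y : P}
    (hy : y ∈ fixedSet f) (hyJ : fixedSet j = fixedSet f \ {y}) : SysCovBy f j := by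
  have hsub : fixedSet j ⊆ fixedSet f := by rw [hyJ]; exact Set.diff_subset
  refine ⟨(sys_le_iff hf hj).2 hsub, ?_, ?_⟩
  · intro h
    have := (sys_eq_iff hf hj).1 h
    rw [hyJ] at this
    have : y ∈ fixedSet f \ {y} := this ▸ hy
    exact this.2 rfl
  · intro h hh hfh hhj
    have h1 : fixedSet h ⊆ fixedSet f := (sys_le_iff hf hh).1 hfh
    have h2 : fixedSet j ⊆ fixedSet h := (sys_le_iff hh hj).1 hhj
    by_cases hyh : y ∈ fixedSet h
    · left
      refine (sys_eq_iff hh hf).2 (le_antisymm h1 ?_)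
      intro a ha
      by_cases hay : a = y
      · rwa [hay]
      · exact h2 (hyJ ▸ ⟨ha, hay⟩)
    · right
      refine (sys_eq_iff hh hj).2 (le_antisymm ?_ h2)
      intro a ha
      rw [hyJ]
      exact ⟨h1 ha, fun hay => hyh (hay ▸ ha)⟩

end SysAux

open SysAux in
theorem stmt12 {P : Type*} [Lattice P] [Fintype P] {f g : P → P}
    (hf : IsSystem f) (hg : IsSystem g)
    (h1 : SysCovBy (sysMeet f g) f) (h2 : SysCovBy (sysMeet f g) g) :
    SysCovBy f (sysJoin f g) ∧ SysCovBy g (sysJoin f g) := by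
  cases isEmpty_or_nonempty P with
  | inl hempty =>
    exact absurd (funext fun a => (IsEmpty.elim hempty a)) h1.2.1
  | inr hne =>
    have hm : IsSystem (sysMeet f g) := isSystem_sysMeet hf hg
    have hj : IsSystem (sysJoin f g) := isSystem_sysJoin hf hg
    obtain ⟨x, hxA, hCx⟩ := cover_step hm hf h1
    obtain ⟨y, hyB, hCy⟩ := cover_step hm hg h2
    have hAC : fixedSet f ⊆ fixedSet (sysMeet f g) := fixedSet_subset_meet_left hg
    have hBC : fixedSet g ⊆ fixedSet (sysMeet f g) := fixedSet_subset_meet_right hf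
    -- f ≠ g
    have hfg : fixedSet f ≠ fixedSet g := by
      intro h
      have : f = g := (sys_eq_iff hf hg).2 h
      apply h1.2.1
      funext a
      show f a ⊓ g a = f a
      rw [← this]
      exact inf_idem _
    -- x ≠ y
    have hxy : x ≠ y := by
      intro h
      subst h
      apply hfg
      ext a
      constructor
      · intro ha
        have : a ∈ fixedSet g ∪ {x} := hCy ▸ (hAC ha)
        rcases this with h' | h'
        · exact h'
        · exact absurd (h' ▸ ha) hxA
      · intro ha
        have : a ∈ fixedSet f ∪ {x} := hCx ▸ (hBC ha)
        rcases this with h' | h'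
        · exact h'
        · exact absurd (h' ▸ ha) hyB
    have hyA : y ∈ fixedSet f := by
      have : y ∈ fixedSet f ∪ {x} := by
        rw [← hCx, hCy]; exact Or.inr rfl
      rcases this with h' | h'
      · exact h'
      · exact absurd h'.symm hxy
    have hxB : x ∈ fixedSet g := by
      have : x ∈ fixedSet g ∪ {y} := by
        rw [← hCy, hCx]; exact Or.inr rfl
      rcases this with h' | h'
      · exact h'
      · exact absurd h' hxy
    have hJ : fixedSet (sysJoin f g) = fixedSet f ∩ fixedSet g := fixedSet_sysJoin hf hg
    have hJA : fixedSet (sysJoin f g) = fixedSet f \ {y} := by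
      rw [hJ]
      ext a
      constructor
      · rintro ⟨ha, hb⟩
        exact ⟨ha, fun h => hyB (h ▸ hb)⟩
      · rintro ⟨ha, hay⟩
        refine ⟨ha, ?_⟩
        have : a ∈ fixedSet g ∪ {y} := by rw [← hCy, hCx]; exact Or.inl ha
        rcases this with h' | h'
        · exact h'
        · exact absurd h' hay
    have hJB : fixedSet (sysJoin f g) = fixedSet g \ {x} := by
      rw [hJ]
      ext a
      constructor
      · rintro ⟨ha, hb⟩
        exact ⟨hb, fun h => hxA (h ▸ ha)⟩
      · rintro ⟨ha, hax⟩
        refine ⟨?_, ha⟩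
        have : a ∈ fixedSet f ∪ {x} := by rw [← hCx, hCy]; exact Or.inl ha
        rcases this with h' | h'
        · exact h'
        · exact absurd h' hax
    exact ⟨covby_of_fix hf hj hyA hJA, covby_of_fix hg hj hxB hJB⟩
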